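/- If T is a conservative measure-preserving transformation of a σ-finite measure space (X, μ) and S is a probability-preserving transformation of (Y, ν), then the product transformation T × S on (X × Y, μ × ν) is conservative. -/

import Mathlib

open MeasureTheory

set_option maxHeartbeats 1000000 in
/-- If `T` is a conservative measure-preserving transformation of a σ-finite
measure space `(X, μ)` and `S` is a probability-preserving transformation of `(Y, ν)`, then
the product transformation `T × S` on `(X × Y, μ × ν)` is conservative. -/
theorem poisson_paper_stmt5 {X Y : Type*} [MeasurableSpace X] [MeasurableSpace Y]
    (μ : Measure X) [SigmaFinite μ] (ν : Measure Y) [IsProbabilityMeasure ν]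
    (T : X → X) (S : Y → Y)
    (hT : MeasurePreserving T μ μ) (hc : Conservative T μ)
    (hS : MeasurePreserving S ν ν) :
    Conservative (Prod.map T S) (μ.prod ν) := by
  refine ⟨(hT.prod hS).quasiMeasurePreserving, ?_⟩
  intro s hs h0
  by_contra H
  push_neg at H
  -- `H : ∀ x ∈ s, ∀ m ≠ 0, (Prod.map T S)^[m] x ∉ s`
  set g : X → ENNReal := fun x => ν (Prod.mk x ⁻¹' s) with hgdef
  have hgm : Measurable g := measurable_measure_prodMk_left hs
  have hint : ∫⁻ x, g x ∂μ = (μ.prod ν) s := (Measure.prod_apply hs).symm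
  -- key bound: partial orbit sums of `g` are at most 1
  have keybound : ∀ (x : X) (F : Finset ℕ), ∑ n ∈ F, g (T^[n] x) ≤ 1 := by
    intro x F
    set B : ℕ → Set Y := fun n => S^[n] ⁻¹' (Prod.mk (T^[n] x) ⁻¹' s) with hB
    have hBm : ∀ n, MeasurableSet (B n) :=
      fun n => (hS.measurable.iterate n) (measurable_prodMk_left hs)
    have hgB : ∀ n, g (T^[n] x) = ν (B n) := fun n =>
      ((hS.iterate n).measure_preimage
        (measurable_prodMk_left hs).nullMeasurableSet).symm
    have hdisj : ∀ i j, i < j → Disjoint (B i) (B j) := by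
      intro i j hij
      rw [Set.disjoint_left]
      intro y hyi hyj
      have hpi : (Prod.map T S)^[i] (x, y) ∈ s := by
        simpa [Prod.map_iterate, hB] using hyi
      have hpj : (Prod.map T S)^[j - i] ((Prod.map T S)^[i] (x, y)) ∈ s := by
        rw [← Function.iterate_add_apply, show j - i + i = j from by omega]
        simpa [Prod.map_iterate, hB] using hyj
      exact H _ hpi (j - i) (by omega) hpj
    calc ∑ n ∈ F, g (T^[n] x) = ∑ n ∈ F, ν (B n) :=
          Finset.sum_congr rfl fun n _ => hgB n
      _ = ν (⋃ n ∈ F, B n) :=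
          (measure_biUnion_finset
            (fun i _ j _ hij =>
              hij.lt_or_gt.elim (hdisj i j) fun h => (hdisj j i h).symm)
            fun n _ => hBm n).symm
      _ ≤ 1 := prob_le_one
  -- find a level set of positive measure
  obtain ⟨m, hm⟩ : ∃ m : ℕ, μ {x | ((m : ENNReal) + 1)⁻¹ < g x} ≠ 0 := by
    by_contra h
    push_neg at h
    have hg0 : ∀ᵐ x ∂μ, g x = 0 := by
      rw [ae_iff]
      refine measure_mono_null ?_ (measure_iUnion_null h)
      intro x hx
      obtain ⟨n, hn⟩ := ENNReal.exists_inv_nat_lt hx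
      exact Set.mem_iUnion.2 ⟨n, lt_of_le_of_lt
        (ENNReal.inv_le_inv.2 (le_add_of_nonneg_right zero_le_one)) hn⟩
    have : ∫⁻ x, g x ∂μ = 0 := (lintegral_eq_zero_iff hgm).2 hg0
    exact h0 (hint ▸ this)
  set A : Set X := {x | ((m : ENNReal) + 1)⁻¹ < g x} with hA
  have hAm : MeasurableSet A := measurableSet_lt measurable_const hgm
  -- a point of A that returns to A infinitely often
  obtain ⟨x, hxA, hx⟩ : ∃ x ∈ A, ∃ᶠ n in Filter.atTop, T^[n] x ∈ A := by
    have hae := hc.ae_mem_imp_frequently_image_mem hAm.nullMeasurableSet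
    by_contra hcon
    push_neg at hcon
    refine hm (measure_mono_null ?_ (ae_iff.1 hae))
    intro x hxA himp
    exact (Filter.not_frequently.2 (hcon x hxA)) (himp hxA)
  have hinf : {n | T^[n] x ∈ A}.Infinite := Nat.frequently_atTop_iff_infinite.1 hx
  obtain ⟨F, hFsub, hFcard⟩ := hinf.exists_subset_card_eq (m + 2)
  have hne : F.Nonempty := Finset.card_pos.1 (by omega)
  have hm1 : ((m : ENNReal) + 1) ≠ 0 := by simp
  have hm2 : ((m : ENNReal) + 1) ≠ ⊤ := by simp
  have h2 : (1 : ENNReal) < ∑ n ∈ F, g (T^[n] x) := by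
    calc (1 : ENNReal) < 1 + ((m : ENNReal) + 1)⁻¹ :=
          ENNReal.lt_add_right ENNReal.one_ne_top (ENNReal.inv_ne_zero.2 hm2)
      _ = ∑ n ∈ F, ((m : ENNReal) + 1)⁻¹ := by
          rw [Finset.sum_const, hFcard, nsmul_eq_mul]
          push_cast
          rw [show ((m : ENNReal) + 2) = ((m : ENNReal) + 1) + 1 by ring, add_mul,
            one_mul, ENNReal.mul_inv_cancel hm1 hm2]
      _ ≤ ∑ n ∈ F, g (T^[n] x) := by
          refine Finset.sum_le_sum fun n hn => ?_
          exact le_of_lt (hFsub hn)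
  exact absurd (keybound x F) (not_le.2 h2)
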